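/- Let d ≥ 4 be an integer and p a prime number, and let v be a nonarchimedean absolute value on ℚ̄ (i.e. v is multiplicative, v(a) = 0 iff a = 0, and v(a+b) ≤ max(v(a), v(b))) with v(p) = 1/p. Then: (i) every x₀ ∈ ℚ̄ with x₀^{d−2} − x₀ − p^{−(d−3)} = 0 satisfies v(x₀) = p^{(d−3)/(d−2)}; (ii) for every such x₀ there exists a sequence (x_n,y_n)_{n≥0} in ℚ̄² with (x_0,y_0) = (x₀,x₀) and, for every n ≥ 0, y_{n+1} ≠ 0, x_{n+1} = y_n, and x_{n+1}^d / y_{n+1}² − p^{−(d−3)} = x_n; and (iii) every sequence (x_n,y_n)_{n≥0} satisfying these conditions satisfies v(x_n) = v(y_n) = p^{(d−3)/(d−2)} for all n ≥ 0. -/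

import Mathlib

/-- A fixed algebraic closure of `ℚ`. -/
noncomputable def Qbar : Type := AlgebraicClosure ℚ

noncomputable instance : Field Qbar := inferInstanceAs (Field (AlgebraicClosure ℚ))
noncomputable instance : Algebra ℚ Qbar := inferInstanceAs (Algebra ℚ (AlgebraicClosure ℚ))

noncomputable instance : IsAlgClosed Qbar := inferInstanceAs (IsAlgClosed (AlgebraicClosure ℚ))
instance : CharZero Qbar := inferInstanceAs (CharZero (AlgebraicClosure ℚ))

lemma pow_inj_aux {t A : ℝ} (ht : 0 ≤ t) (hA : 0 ≤ A) {n : ℕ} (hn : n ≠ 0)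
    (h : t ^ n = A ^ n) : t = A := by
  rcases lt_trichotomy t A with h' | h' | h'
  · exact absurd h (ne_of_lt (pow_lt_pow_left₀ h' ht hn))
  · exact h'
  · exact absurd h.symm (ne_of_lt (pow_lt_pow_left₀ h' hA hn))


/-- Being a backward orbit of `(x₀,x₀)` under `f_{d,p}(x,y) = (x^d/y² - p^{-(d-3)}, x)`:
`s 0 = (x₀,x₀)` and for all `n`, `y_{n+1} ≠ 0`, `x_{n+1} = y_n`, and
`x_{n+1}^d / y_{n+1}² - p^{-(d-3)} = x_n`. -/
def IsBackwardOrbit (d p : ℕ) (x₀ : Qbar) (s : ℕ → Qbar × Qbar) : Prop :=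
  s 0 = (x₀, x₀) ∧
    ∀ n : ℕ, (s (n + 1)).2 ≠ 0 ∧ (s (n + 1)).1 = (s n).2 ∧
      (s (n + 1)).1 ^ d / (s (n + 1)).2 ^ 2 - ((p : Qbar) ^ (d - 3))⁻¹ = (s n).1

/-- Let `d ≥ 4`, `p` prime, and `v` a nonarchimedean absolute value on `ℚ̄` with
`v(p) = 1/p`.  Then (i) every root `x₀` of `x^{d-2} - x - p^{-(d-3)}` has
`v(x₀) = p^{(d-3)/(d-2)}`; (ii) every such `x₀` admits a backward orbit of `(x₀,x₀)` under
`f_{d,p}`; and (iii) every such backward orbit satisfies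
`v(x_n) = v(y_n) = p^{(d-3)/(d-2)}` for all `n`. -/
theorem stmt15 (d p : ℕ) (hd : 4 ≤ d) (hp : p.Prime)
    (v : Qbar → ℝ)
    (hv_nonneg : ∀ a, 0 ≤ v a)
    (hv_mul : ∀ a b, v (a * b) = v a * v b)
    (hv_eq_zero : ∀ a, v a = 0 ↔ a = 0)
    (hv_ultra : ∀ a b, v (a + b) ≤ max (v a) (v b))
    (hv_p : v (p : Qbar) = 1 / (p : ℝ)) :
    (∀ x₀ : Qbar, x₀ ^ (d - 2) - x₀ - ((p : Qbar) ^ (d - 3))⁻¹ = 0 →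
      v x₀ = (p : ℝ) ^ (((d : ℝ) - 3) / ((d : ℝ) - 2))) ∧
    (∀ x₀ : Qbar, x₀ ^ (d - 2) - x₀ - ((p : Qbar) ^ (d - 3))⁻¹ = 0 →
      ∃ s : ℕ → Qbar × Qbar, IsBackwardOrbit d p x₀ s) ∧
    (∀ x₀ : Qbar, x₀ ^ (d - 2) - x₀ - ((p : Qbar) ^ (d - 3))⁻¹ = 0 →
      ∀ s : ℕ → Qbar × Qbar, IsBackwardOrbit d p x₀ s →
        ∀ n : ℕ, v (s n).1 = (p : ℝ) ^ (((d : ℝ) - 3) / ((d : ℝ) - 2)) ∧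
          v (s n).2 = (p : ℝ) ^ (((d : ℝ) - 3) / ((d : ℝ) - 2))) := by
  classical
  set c : Qbar := ((p : Qbar) ^ (d - 3))⁻¹ with hc_def
  set A : ℝ := (p : ℝ) ^ (((d : ℝ) - 3) / ((d : ℝ) - 2)) with hA_def
  -- basic facts about v
  have hv1 : v 1 = 1 := by
    have h := hv_mul 1 1
    rw [one_mul] at h
    have h1 : v 1 ≠ 0 := fun h0 => one_ne_zero ((hv_eq_zero 1).mp h0)
    have h2 := mul_left_cancel₀ h1 (show v 1 * v 1 = v 1 * 1 by rw [mul_one, ← h])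
    linarith
  have hvpow : ∀ (a : Qbar) (n : ℕ), v (a ^ n) = v a ^ n := by
    intro a n
    induction n with
    | zero => simpa using hv1
    | succ n ih => rw [pow_succ, pow_succ, hv_mul, ih]
  have hvneg : ∀ a : Qbar, v (-a) = v a := by
    have hm1 : v (-1 : Qbar) = 1 := by
      have h : v (-1 : Qbar) * v (-1 : Qbar) = 1 := by
        rw [← hv_mul]; norm_num [hv1]
      nlinarith [hv_nonneg (-1 : Qbar)]
    intro a
    calc v (-a) = v (-1 * a) := by norm_num
      _ = v a := by rw [hv_mul, hm1, one_mul]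
  have hvinv : ∀ a : Qbar, a ≠ 0 → v a⁻¹ = (v a)⁻¹ := by
    intro a ha
    have hva : v a ≠ 0 := fun h => ha ((hv_eq_zero a).mp h)
    have h : v a⁻¹ * v a = 1 := by rw [← hv_mul, inv_mul_cancel₀ ha, hv1]
    field_simp at h ⊢
    linarith
  have hmax' : ∀ a b : Qbar, v b < v a → v (a + b) = v a := by
    intro a b h
    have h1 : v (a + b) ≤ v a := le_trans (hv_ultra a b) (max_le le_rfl h.le)
    have h2 : v a ≤ max (v (a + b)) (v b) := by
      have h3 := hv_ultra (a + b) (-b)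
      rw [hvneg] at h3
      simpa using h3
    rcases max_cases (v (a + b)) (v b) with ⟨he, _⟩ | ⟨he, _⟩
    · rw [he] at h2; linarith
    · rw [he] at h2; linarith
  have hadd : ∀ a b : Qbar, v a ≠ v b → v (a + b) = max (v a) (v b) := by
    intro a b h
    rcases lt_trichotomy (v a) (v b) with h' | h' | h'
    · rw [add_comm, hmax' b a h', max_eq_right h'.le]
    · exact absurd h' h
    · rw [hmax' a b h', max_eq_left h'.le]
  -- real arithmetic
  have hpR : (1 : ℝ) < p := by exact_mod_cast hp.one_lt
  have hdR : (4 : ℝ) ≤ d := by exact_mod_cast hd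
  have hc3 : ((d - 3 : ℕ) : ℝ) = (d : ℝ) - 3 := by
    have h3 : 3 ≤ d := by omega
    push_cast [h3]; ring
  have hc2 : ((d - 2 : ℕ) : ℝ) = (d : ℝ) - 2 := by
    have h2 : 2 ≤ d := by omega
    push_cast [h2]; ring
  have hA_pos : 0 < A := Real.rpow_pos_of_pos (by linarith) _
  have hApow : A ^ (d - 2) = (p : ℝ) ^ (d - 3) := by
    rw [hA_def, ← Real.rpow_natCast ((p:ℝ) ^ (((d : ℝ) - 3) / ((d : ℝ) - 2))) (d - 2),
      ← Real.rpow_mul (by linarith), ← Real.rpow_natCast (p : ℝ) (d - 3), hc2, hc3]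
    congr 1
    rw [div_mul_cancel₀ _ (ne_of_gt (by linarith : (0:ℝ) < (d:ℝ) - 2))]
  have hP_pos : (0 : ℝ) < (p : ℝ) ^ (d - 3) := by positivity
  have hP1 : (1 : ℝ) < (p : ℝ) ^ (d - 3) := one_lt_pow₀ hpR (by omega)
  have hAlt : A < (p : ℝ) ^ (d - 3) := by
    rw [← Real.rpow_natCast (p : ℝ) (d - 3), hc3, hA_def]
    rw [Real.rpow_lt_rpow_left_iff hpR]
    rw [div_lt_iff₀ (by linarith)]
    nlinarith
  have hAd : A ^ d = A ^ 2 * (p : ℝ) ^ (d - 3) := by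
    rw [← hApow, ← pow_add]
    congr 1
    omega
  have hpne : (p : Qbar) ≠ 0 := Nat.cast_ne_zero.mpr hp.pos.ne'
  have hvc : v c = (p : ℝ) ^ (d - 3) := by
    rw [hc_def, hvinv _ (pow_ne_zero _ hpne), hvpow, hv_p]
    rw [one_div, inv_pow, inv_inv]
  have hvdiv : ∀ a b : Qbar, b ≠ 0 → v (a / b) = v a / v b := by
    intro a b hb
    rw [div_eq_mul_inv, hv_mul, hvinv _ hb, div_eq_mul_inv]
  -- part (i)
  have keyi : ∀ x₀ : Qbar, x₀ ^ (d - 2) - x₀ - c = 0 → v x₀ = A := by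
    intro x₀ hx
    have heq : x₀ ^ (d - 2) = x₀ + c := by linear_combination hx
    have ht : v x₀ ^ (d - 2) = v (x₀ + c) := by rw [← hvpow, heq]
    set t := v x₀ with ht_def
    have ht0 : 0 ≤ t := hv_nonneg _
    rcases lt_trichotomy t ((p : ℝ) ^ (d - 3)) with hlt | heq' | hgt
    · have hne : t ≠ v c := by rw [hvc]; exact ne_of_lt hlt
      have hvx : v (x₀ + c) = (p : ℝ) ^ (d - 3) := by
        rw [hadd _ _ hne, hvc, max_eq_right hlt.le]
      have htpow : t ^ (d - 2) = A ^ (d - 2) := by rw [ht, hvx, hApow]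
      exact pow_inj_aux ht0 hA_pos.le (by omega) htpow
    · exfalso
      have h1 : v (x₀ + c) ≤ t := by
        have := hv_ultra x₀ c
        rw [hvc, ← heq'] at this
        exact this.trans (max_le le_rfl le_rfl)
      have h2 : t ^ 2 ≤ t ^ (d - 2) := pow_le_pow_right₀ (by linarith) (by omega)
      nlinarith
    · exfalso
      have hne : t ≠ v c := by rw [hvc]; exact ne_of_gt hgt
      have hvx : v (x₀ + c) = t := by
        rw [hadd _ _ hne, hvc, max_eq_left hgt.le]
      have h2 : t ^ 2 ≤ t ^ (d - 2) := pow_le_pow_right₀ (by linarith) (by omega)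
      nlinarith
  -- auxiliary: v of x + c when v x = A
  have hvxc : ∀ x : Qbar, v x = A → v (x + c) = (p : ℝ) ^ (d - 3) := by
    intro x hx
    have hne : v x ≠ v c := by rw [hx, hvc]; exact ne_of_lt hAlt
    rw [hadd _ _ hne, hx, hvc, max_eq_right hAlt.le]
  have hxcne : ∀ x : Qbar, v x = A → x + c ≠ 0 := by
    intro x hx h0
    have := hvxc x hx
    rw [h0, (hv_eq_zero 0).mpr rfl] at this
    linarith
  -- the key computation for backward steps
  have hcomp : ∀ x x' y' : Qbar, v x = A → y' ≠ 0 → x' ^ d / y' ^ 2 - c = x →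
      v x' = A → v y' = A := by
    intro x x' y' hx hy' heq hx'
    have hy'v : v y' ≠ 0 := fun h => hy' ((hv_eq_zero y').mp h)
    have hy'pos : 0 < v y' := lt_of_le_of_ne (hv_nonneg y') (Ne.symm hy'v)
    have heq2 : x' ^ d / y' ^ 2 = x + c := by linear_combination heq
    have h1 : v x' ^ d / v y' ^ 2 = (p : ℝ) ^ (d - 3) := by
      rw [← hvpow, ← hvpow, ← hvdiv _ _ (pow_ne_zero 2 hy'), heq2, hvxc x hx]
    rw [hx'] at h1
    have h2 : v y' ^ 2 = A ^ 2 := by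
      have h3 : A ^ d = (p : ℝ) ^ (d - 3) * v y' ^ 2 := by
        field_simp at h1
        linarith
      rw [hAd] at h3
      have := mul_left_cancel₀ (ne_of_gt hP_pos)
        (by linarith : (p : ℝ) ^ (d - 3) * (A ^ 2) = (p : ℝ) ^ (d - 3) * (v y' ^ 2))
      linarith
    exact pow_inj_aux (hv_nonneg y') hA_pos.le (two_ne_zero) h2
  -- existence of a backward step
  have hexists : ∀ q : Qbar × Qbar, ∃ y' : Qbar, (v q.1 = A ∧ v q.2 = A) →
      (y' ≠ 0 ∧ q.2 ^ d / y' ^ 2 - c = q.1 ∧ v y' = A) := by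
    rintro ⟨x, y⟩
    by_cases h : v x = A ∧ v y = A
    · obtain ⟨hx, hy⟩ := h
      have hxc : x + c ≠ 0 := hxcne x hx
      have hyne : y ≠ 0 := by
        intro h0
        rw [h0, (hv_eq_zero 0).mpr rfl] at hy
        linarith
      obtain ⟨z, hz⟩ := IsAlgClosed.exists_pow_nat_eq (k := Qbar) (y ^ d / (x + c))
        (n := 2) (by norm_num)
      have hzne : z ≠ 0 := by
        intro h0
        have h2 : y ^ d / (x + c) = 0 := by rw [← hz, h0]; ring
        rcases div_eq_zero_iff.mp h2 with h3 | h3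
        · exact pow_ne_zero d hyne h3
        · exact hxc h3
      have heqz : y ^ d / z ^ 2 - c = x := by
        rw [hz]
        field_simp
        ring
      exact ⟨z, fun _ => ⟨hzne, heqz, hcomp x y z hx hzne heqz hy⟩⟩
    · exact ⟨0, fun hq => absurd hq h⟩
  choose F hF using hexists
  refine ⟨keyi, ?_, ?_⟩
  · -- part (ii)
    intro x₀ hx
    set g : Qbar × Qbar → Qbar × Qbar := fun q => (q.2, F q) with hg_def
    set s : ℕ → Qbar × Qbar := fun n => g^[n] (x₀, x₀) with hs_def
    have hssucc : ∀ n, s (n + 1) = g (s n) := by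
      intro n
      simp only [hs_def]
      exact Function.iterate_succ_apply' g n (x₀, x₀)
    have hinv : ∀ n, v (s n).1 = A ∧ v (s n).2 = A := by
      intro n
      induction n with
      | zero =>
        simp only [hs_def, Function.iterate_zero, id_eq]
        exact ⟨keyi x₀ hx, keyi x₀ hx⟩
      | succ n ih =>
        rw [hssucc n]
        exact ⟨ih.2, (hF (s n) ih).2.2⟩
    refine ⟨s, ?_, ?_⟩
    · simp [hs_def]
    · intro n
      rw [hssucc n]
      obtain ⟨h1, h2, h3⟩ := hF (s n) (hinv n)
      exact ⟨h1, rfl, h2⟩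
  · -- part (iii)
    intro x₀ hx s hs
    obtain ⟨hs0, hsrec⟩ := hs
    intro n
    induction n with
    | zero =>
      rw [hs0]
      exact ⟨keyi x₀ hx, keyi x₀ hx⟩
    | succ n ih =>
      obtain ⟨h1, h2, h3⟩ := hsrec n
      have hx1 : v (s (n + 1)).1 = A := by rw [h2]; exact ih.2
      exact ⟨hx1, hcomp (s n).1 (s (n + 1)).1 (s (n + 1)).2 ih.1 h1 h3 hx1⟩
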